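/- Let D be a (v,b,r,k,λ)-BIBD with v ≤ b (which holds by Fisher's inequality), and let A be the adjacency matrix over ℝ of the incidence graph Γ_D of D. Then the characteristic polynomial of A equals X^{b−v} · (X² − r·k) · (X² − (r−λ))^{v−1}. -/

import Mathlib

set_option synthInstance.maxHeartbeats 1000000
set_option maxHeartbeats 1600000


/-- A `(v,b,r,k,lam)`-balanced incomplete block design: a finite set of `v` points and a
family of `b` distinct blocks, each block a `k`-element subset of the points with
`1 < k < v`, such that every point lies in exactly `r` blocks and every pair of distinct
points is contained in exactly `lam` blocks (all parameters positive). -/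
structure BIBD (v b r k lam : ℕ) where
  P : Type
  [fintypeP : Fintype P]
  [decEqP : DecidableEq P]
  blocks : Finset (Finset P)
  card_points : Fintype.card P = v
  card_blocks : blocks.card = b
  block_size : ∀ c ∈ blocks, c.card = k
  one_lt_k : 1 < k
  k_lt_v : k < v
  lam_pos : 0 < lam
  point_deg : ∀ p : P, (blocks.filter (fun c => p ∈ c)).card = r
  pair_deg : ∀ p q : P, p ≠ q → (blocks.filter (fun c => p ∈ c ∧ q ∈ c)).card = lam

attribute [instance] BIBD.fintypeP BIBD.decEqP

variable {v b r k lam : ℕ}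

/-- A flag of a BIBD: an incident point-block pair `(p, c)` with `p ∈ c`. -/
def BIBD.Flag (D : BIBD v b r k lam) : Type :=
  {pc : D.P × Finset D.P // pc.2 ∈ D.blocks ∧ pc.1 ∈ pc.2}

instance (D : BIBD v b r k lam) : Fintype D.Flag :=
  inferInstanceAs (Fintype {pc : D.P × Finset D.P // pc.2 ∈ D.blocks ∧ pc.1 ∈ pc.2})

instance (D : BIBD v b r k lam) : DecidableEq D.Flag :=
  inferInstanceAs (DecidableEq {pc : D.P × Finset D.P // pc.2 ∈ D.blocks ∧ pc.1 ∈ pc.2})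

/-- The type of blocks of a BIBD. -/
def BIBD.Block (D : BIBD v b r k lam) : Type := {c : Finset D.P // c ∈ D.blocks}

instance (D : BIBD v b r k lam) : Fintype D.Block :=
  inferInstanceAs (Fintype {c : Finset D.P // c ∈ D.blocks})

instance (D : BIBD v b r k lam) : DecidableEq D.Block :=
  inferInstanceAs (DecidableEq {c : Finset D.P // c ∈ D.blocks})

/-- The incidence graph of `D`: the bipartite graph on points and blocks, with a point
adjacent to a block iff it lies in the block. -/
def BIBD.incGraph (D : BIBD v b r k lam) : SimpleGraph (D.P ⊕ D.Block) where
  Adj x y := match x, y with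
    | Sum.inl p, Sum.inr c => p ∈ c.1
    | Sum.inr c, Sum.inl p => p ∈ c.1
    | _, _ => False
  symm := ⟨by rintro (p | c) (q | d) h <;> exact h⟩
  loopless := ⟨by rintro (p | c) h <;> exact h⟩

instance (D : BIBD v b r k lam) : DecidableRel D.incGraph.Adj := fun x y =>
  match x, y with
  | Sum.inl p, Sum.inr c => inferInstanceAs (Decidable (p ∈ c.1))
  | Sum.inr c, Sum.inl p => inferInstanceAs (Decidable (p ∈ c.1))
  | Sum.inl _, Sum.inl _ => Decidable.isFalse fun h => h
  | Sum.inr _, Sum.inr _ => Decidable.isFalse fun h => h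


open Matrix Finset

theorem det_smul_one_sub_smul_ones (P : Type) [Fintype P] [DecidableEq P] (F : Type) [Field F]
    (a c : F) (ha : a ≠ 0) (hP : 0 < Fintype.card P) :
    Matrix.det (a • (1 : Matrix P P F) - c • Matrix.of (fun _ _ => (1:F))) =
      a ^ (Fintype.card P - 1) * (a - (Fintype.card P : F) * c) := by
  have h1 : a • (1 : Matrix P P F) - c • Matrix.of (fun _ _ => (1:F)) =
      a • (1 + Matrix.replicateCol Unit (fun _ => -(c/a)) * Matrix.replicateRow Unit (fun _ => (1:F))) := by
    ext i j
    by_cases h : i = j <;>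
      · simp [h, Matrix.one_apply, Matrix.mul_apply]
        field_simp
        try ring
  rw [h1, Matrix.det_smul, Matrix.det_one_add_replicateCol_mul_replicateRow]
  have h2 : dotProduct (fun _ : P => (1:F)) (fun _ => -(c/a)) =
      -((Fintype.card P : F) * (c/a)) := by
    simp [dotProduct, Finset.sum_const, nsmul_eq_mul]
  rw [h2]
  have hv : a ^ Fintype.card P = a ^ (Fintype.card P - 1) * a := by
    rw [← pow_succ, Nat.sub_add_cancel hP]
  rw [hv]
  field_simp
  ring

theorem BIBD.count_eq (D : BIBD v b r k lam) : r * (k - 1) = lam * (v - 1) := by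
  have hv : 0 < v := lt_trans (lt_trans Nat.zero_lt_one D.one_lt_k) D.k_lt_v
  obtain ⟨p⟩ : Nonempty D.P := by
    rw [← Fintype.card_pos_iff, D.card_points]; exact hv
  set S := D.blocks.filter (fun c => p ∈ c) with hS
  calc r * (k - 1) = ∑ _c ∈ S, (k - 1) := by
        rw [Finset.sum_const, D.point_deg p, smul_eq_mul, mul_comm]
    _ = ∑ c ∈ S, ((Finset.univ.erase p).filter (fun q => q ∈ c)).card := by
        apply Finset.sum_congr rfl; intro c hc
        rw [hS, Finset.mem_filter] at hc
        have h2 : (Finset.univ.erase p).filter (fun q => q ∈ c) = c.erase p := by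
          ext q; simp [Finset.mem_erase, and_comm]
        rw [h2, Finset.card_erase_of_mem hc.2, D.block_size c hc.1]
    _ = ∑ c ∈ S, ∑ q ∈ Finset.univ.erase p, (if q ∈ c then 1 else 0) := by
        simp [Finset.card_filter]
    _ = ∑ q ∈ Finset.univ.erase p, ∑ c ∈ S, (if q ∈ c then 1 else 0) := Finset.sum_comm
    _ = ∑ _q ∈ Finset.univ.erase p, lam := by
        apply Finset.sum_congr rfl; intro q hq
        have hq' : p ≠ q := fun h => (Finset.mem_erase.mp hq).1 h.symm
        rw [← Finset.card_filter]
        have h3 : S.filter (fun c => q ∈ c) = D.blocks.filter (fun c => p ∈ c ∧ q ∈ c) := by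
          rw [hS, Finset.filter_filter]
        rw [h3, D.pair_deg p q hq']
    _ = lam * (v - 1) := by
        rw [Finset.sum_const, Finset.card_erase_of_mem (Finset.mem_univ p),
          Finset.card_univ, D.card_points, smul_eq_mul, mul_comm]

/-- The characteristic polynomial of the adjacency matrix of the incidence graph of a
`(v,b,r,k,λ)`-BIBD with `v ≤ b` is `X^(b-v)·(X² - rk)·(X² - (r-λ))^(v-1)`. -/
theorem incGraph_adjMatrix_charpoly (D : BIBD v b r k lam) (hvb : v ≤ b) :
    (D.incGraph.adjMatrix ℝ).charpoly =
      Polynomial.X ^ (b - v) *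
        (Polynomial.X ^ 2 - Polynomial.C ((r : ℝ) * (k : ℝ))) *
        (Polynomial.X ^ 2 - Polynomial.C ((r : ℝ) - (lam : ℝ))) ^ (v - 1) := by
  classical
  have hk1 := D.one_lt_k
  have hkv := D.k_lt_v
  have hv : 0 < v := by omega
  have hcardP : Fintype.card D.P = v := D.card_points
  have hcardB : Fintype.card D.Block = b :=
    (Fintype.card_coe D.blocks).trans D.card_blocks
  -- the incidence matrix
  set N : Matrix D.P D.Block ℝ := Matrix.of (fun p c => if p ∈ c.1 then (1:ℝ) else 0) with hN
  have hA : D.incGraph.adjMatrix ℝ = Matrix.fromBlocks 0 N Nᵀ 0 := by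
    ext i j
    rcases i with p | c <;> rcases j with q | d <;>
      rw [SimpleGraph.adjMatrix_apply] <;> simp [BIBD.incGraph, hN] <;> congr
  have hNNT : N * Nᵀ = Matrix.of (fun p q => if p = q then (r:ℝ) else (lam:ℝ)) := by
    ext p q
    simp only [Matrix.mul_apply, Matrix.transpose_apply, Matrix.of_apply, hN]
    have hprod : ∀ c : D.Block, (if p ∈ c.1 then (1:ℝ) else 0) * (if q ∈ c.1 then 1 else 0)
        = if p ∈ c.1 ∧ q ∈ c.1 then 1 else 0 := by
      intro c; split_ifs <;> simp_all
    rw [Finset.sum_congr rfl (fun c _ => hprod c)]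
    have hsum : ∑ c : D.Block, (if p ∈ c.1 ∧ q ∈ c.1 then (1:ℝ) else 0)
        = ((D.blocks.filter (fun c => p ∈ c ∧ q ∈ c)).card : ℝ) := by
      rw [Finset.card_filter]
      push_cast
      exact (Finset.sum_subtype D.blocks (fun c => Iff.rfl)
        (fun c => if p ∈ c ∧ q ∈ c then (1:ℝ) else 0)).symm
    rw [hsum]
    by_cases h : p = q
    · subst h
      have hfil : D.blocks.filter (fun c => p ∈ c ∧ p ∈ c) = D.blocks.filter (fun c => p ∈ c) := by
        simp
      rw [hfil, D.point_deg p, if_pos rfl]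
    · rw [if_neg h, D.pair_deg p q h]
  -- move to the field of rational functions
  set φ : Polynomial ℝ →+* RatFunc ℝ :=
    (algebraMap (Polynomial ℝ) (RatFunc ℝ) : Polynomial ℝ →+* RatFunc ℝ) with hφ
  set ψ : ℝ →+* RatFunc ℝ := φ.comp Polynomial.C with hψ
  have hC : ∀ y : ℝ, φ (Polynomial.C y) = ψ y := fun y => rfl
  set x : RatFunc ℝ := φ Polynomial.X with hxdef
  have hinj : Function.Injective φ := RatFunc.algebraMap_injective ℝ
  have hx : x ≠ 0 := by
    rw [hxdef]
    intro h
    exact Polynomial.X_ne_zero (hinj (h.trans (map_zero φ).symm))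
  apply hinj
  -- the RHS
  have hRHS : φ (Polynomial.X ^ (b - v) *
        (Polynomial.X ^ 2 - Polynomial.C ((r : ℝ) * (k : ℝ))) *
        (Polynomial.X ^ 2 - Polynomial.C ((r : ℝ) - (lam : ℝ))) ^ (v - 1)) =
      x ^ (b - v) * (x ^ 2 - (r : RatFunc ℝ) * (k : RatFunc ℝ)) *
        (x ^ 2 - ((r : RatFunc ℝ) - (lam : RatFunc ℝ))) ^ (v - 1) := by
    simp only [_root_.map_mul, map_pow, _root_.map_sub, hC, ← hxdef, _root_.map_natCast]
  rw [hRHS]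
  -- the LHS
  rw [Matrix.charpoly, RingHom.map_det, RingHom.mapMatrix_apply, hA, Matrix.charmatrix_fromBlocks]
  have hblock1 : (Matrix.charmatrix (0 : Matrix D.P D.P ℝ)).map φ =
      x • (1 : Matrix D.P D.P (RatFunc ℝ)) := by
    ext i j
    by_cases h : i = j <;>
      simp [Matrix.charmatrix_apply, Matrix.map_apply, Matrix.one_apply, h,
        Matrix.diagonal_apply, Matrix.smul_apply, hxdef, _root_.map_sub, map_zero,
        smul_eq_mul, mul_one, mul_zero]
  have hblock4 : (Matrix.charmatrix (0 : Matrix D.Block D.Block ℝ)).map φ =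
      x • (1 : Matrix D.Block D.Block (RatFunc ℝ)) := by
    ext i j
    by_cases h : i = j <;>
      simp [Matrix.charmatrix_apply, Matrix.map_apply, Matrix.one_apply, h,
        Matrix.diagonal_apply, Matrix.smul_apply, hxdef, _root_.map_sub, map_zero,
        smul_eq_mul, mul_one, mul_zero]
  have hblock2 : (-(N.map Polynomial.C)).map φ = -(N.map ψ) := by
    ext i j; simp [Matrix.map_apply, hC]
  have hblock3 : (-(Nᵀ.map Polynomial.C)).map φ = -((N.map ψ)ᵀ) := by
    ext i j; simp [Matrix.map_apply, Matrix.transpose_apply, hC]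
  have hmap : (Matrix.fromBlocks (Matrix.charmatrix (0 : Matrix D.P D.P ℝ))
      (-(N.map Polynomial.C)) (-(Nᵀ.map Polynomial.C))
      (Matrix.charmatrix (0 : Matrix D.Block D.Block ℝ))).map φ =
      Matrix.fromBlocks (x • (1 : Matrix D.P D.P (RatFunc ℝ))) (-(N.map ψ)) (-((N.map ψ)ᵀ))
        (x • (1 : Matrix D.Block D.Block (RatFunc ℝ))) := by
    rw [Matrix.fromBlocks_map, hblock1, hblock2, hblock3, hblock4]
  rw [hmap]
  set Nf : Matrix D.P D.Block (RatFunc ℝ) := N.map ψ with hNf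
  -- invertibility of the bottom-right block
  have hinv1 : (x • (1 : Matrix D.Block D.Block (RatFunc ℝ))) * (x⁻¹ • 1) = 1 := by
    rw [Matrix.smul_mul, Matrix.mul_smul, smul_smul, mul_inv_cancel₀ hx, one_smul, Matrix.mul_one]
  have hinv2 : (x⁻¹ • (1 : Matrix D.Block D.Block (RatFunc ℝ))) * (x • 1) = 1 := by
    rw [Matrix.smul_mul, Matrix.mul_smul, smul_smul, inv_mul_cancel₀ hx, one_smul, Matrix.mul_one]
  haveI : Invertible (x • (1 : Matrix D.Block D.Block (RatFunc ℝ))) := ⟨x⁻¹ • 1, hinv2, hinv1⟩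
  rw [Matrix.det_fromBlocks₂₂, invOf_eq_right_inv hinv1]
  have hdetD : (x • (1 : Matrix D.Block D.Block (RatFunc ℝ))).det = x ^ b := by
    rw [Matrix.det_smul, Matrix.det_one, mul_one, hcardB]
  rw [hdetD]
  have hxx : x⁻¹ * x ^ 2 = x := by
    rw [sq, ← mul_assoc, inv_mul_cancel₀ hx, one_mul]
  have hschur : x • (1 : Matrix D.P D.P (RatFunc ℝ)) -
      -Nf * (x⁻¹ • (1 : Matrix D.Block D.Block (RatFunc ℝ))) * -Nfᵀ =
      x⁻¹ • (x ^ 2 • (1 : Matrix D.P D.P (RatFunc ℝ)) - Nf * Nfᵀ) := by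
    rw [Matrix.neg_mul, Matrix.mul_neg, Matrix.neg_mul, neg_neg, Matrix.mul_smul,
      Matrix.mul_one, Matrix.smul_mul, smul_sub, smul_smul, hxx]
  rw [hschur, Matrix.det_smul, hcardP]
  -- compute Nf * Nfᵀ
  have hM : Nf * Nfᵀ =
      Matrix.of (fun p q => if p = q then (r:RatFunc ℝ) else (lam:RatFunc ℝ)) := by
    rw [hNf, ← Matrix.transpose_map, ← Matrix.map_mul, hNNT]
    ext p q
    simp [Matrix.map_apply, apply_ite ψ, _root_.map_natCast]
  rw [hM]
  set a : RatFunc ℝ := x ^ 2 - ((r : RatFunc ℝ) - (lam : RatFunc ℝ)) with ha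
  have hJ : x ^ 2 • (1 : Matrix D.P D.P (RatFunc ℝ)) -
      Matrix.of (fun p q => if p = q then (r:RatFunc ℝ) else (lam:RatFunc ℝ)) =
      a • 1 - (lam : RatFunc ℝ) • Matrix.of (fun _ _ => (1:RatFunc ℝ)) := by
    ext p q
    by_cases h : p = q <;>
      · simp [h, Matrix.one_apply, ha]
        try ring
  have ha2 : φ (Polynomial.X ^ 2 - Polynomial.C ((r:ℝ) - (lam:ℝ))) = a := by
    rw [_root_.map_sub, map_pow, hC, _root_.map_sub, _root_.map_natCast, _root_.map_natCast,
      ← hxdef, ha]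
  have hane : a ≠ 0 := by
    rw [← ha2]
    intro h
    exact Polynomial.X_pow_sub_C_ne_zero (by norm_num) _ (hinj (h.trans (map_zero φ).symm))
  rw [hJ, det_smul_one_sub_smul_ones D.P (RatFunc ℝ) a (lam : RatFunc ℝ) hane
    (by rw [hcardP]; omega), hcardP]
  -- the parameter identity
  have hid : a - (v : RatFunc ℝ) * (lam : RatFunc ℝ) =
      x ^ 2 - (r : RatFunc ℝ) * (k : RatFunc ℝ) := by
    have h2 : r * k = lam * (v - 1) + r := by
      conv_lhs => rw [show k = (k - 1) + 1 from (Nat.succ_pred_eq_of_pos (by omega)).symm]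
      rw [Nat.mul_succ, D.count_eq]
    have h3 : ((r * k : ℕ) : RatFunc ℝ) = ((lam * (v - 1) + r : ℕ) : RatFunc ℝ) := by
      exact_mod_cast congrArg (Nat.cast : ℕ → RatFunc ℝ) h2
    push_cast [Nat.cast_sub (show 1 ≤ v by omega)] at h3
    rw [ha]
    linear_combination h3
  rw [hid]
  -- final field arithmetic
  have hxb : x ^ b = x ^ (b - v) * x ^ v := by rw [← pow_add, Nat.sub_add_cancel hvb]
  rw [hxb, inv_pow]
  field_simp
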